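/- arXiv:2103.16124 — 6 statements merged into one kernel-verified Lean document; each statement's English description precedes it below -/
import Mathlib

section
/- For every positive integer N and every n ≥ 1, B_{N,n} = n! · Σ_{r=1}^{n} (-N!)^r · Σ_{i_1+⋯+i_r = n, i_j ≥ 1} 1/((N+i_1)!···(N+i_r)!). -/
open PowerSeries Finset

lemma coeff_pow_tuple (φ : PowerSeries ℂ) (r n : ℕ) :
    PowerSeries.coeff n (φ ^ r) =
      ∑ i ∈ Finset.Nat.antidiagonalTuple r n, ∏ j, PowerSeries.coeff (i j) φ := by
  have h : φ ^ r = ∏ _j : Fin r, φ := by simp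
  rw [h, PowerSeries.coeff_prod]
  refine Finset.sum_nbij' (fun l => ⇑l) (fun i => Finsupp.equivFunOnFinite.symm i) ?_ ?_ ?_ ?_ ?_
  · intro l hl
    simp only [mem_finsuppAntidiag] at hl
    simp [Finset.Nat.mem_antidiagonalTuple, ← hl.1]
  · intro i hi
    simp only [Finset.Nat.mem_antidiagonalTuple] at hi
    simp only [mem_finsuppAntidiag]
    constructor
    · rw [← hi]; exact Finset.sum_congr rfl fun j _ => rfl
    · exact Finset.subset_univ _
  · intro l _; exact Finsupp.equivFunOnFinite.symm_apply_apply l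
  · intro i _; rfl
  · intro l _; rfl


noncomputable def eSer (c : ℂ) : PowerSeries ℂ := PowerSeries.mk fun n => c ^ n / n.factorial

noncomputable def dSer (N f : ℕ) : PowerSeries ℂ :=
  PowerSeries.mk fun m => (N.factorial : ℂ) * (f : ℂ) ^ m / (N + m).factorial

noncomputable def hB (N n : ℕ) : ℂ :=
  n.factorial * PowerSeries.coeff n (dSer N 1)⁻¹

noncomputable def hBP (N n : ℕ) (x : ℂ) : ℂ :=
  n.factorial * PowerSeries.coeff n (eSer x * (dSer N 1)⁻¹)

noncomputable def gBP (N f : ℕ) (χ : DirichletCharacter ℂ f) (n : ℕ) (x : ℂ) : ℂ :=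
  n.factorial * PowerSeries.coeff n
    (((f : ℂ) ^ N)⁻¹ • ((∑ a ∈ Finset.Icc 1 f, (PowerSeries.C (χ (a : ZMod f))) * eSer (x + a)) * (dSer N f)⁻¹))

noncomputable def gB (N f : ℕ) (χ : DirichletCharacter ℂ f) (n : ℕ) : ℂ := gBP N f χ n 0

lemma coeff_inv_eq (N n : ℕ) (hn : 1 ≤ n) :
    PowerSeries.coeff n (dSer N 1)⁻¹ =
      ∑ r ∈ Finset.Icc 1 n, (-(N.factorial : ℂ)) ^ r *
        ∑ i ∈ (Finset.Nat.antidiagonalTuple r n).filter (fun i => ∀ j, 1 ≤ i j),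
          ∏ j, ((N + i j).factorial : ℂ)⁻¹ := by
  set d := dSer N 1 with hd
  have hc0 : constantCoeff d = 1 := by
    simp [hd, dSer, ← coeff_zero_eq_constantCoeff_apply, coeff_mk,
      Nat.factorial_ne_zero, div_self, Nat.cast_ne_zero]
  set g := d - 1 with hg
  have hgc : constantCoeff g = 0 := by simp [hg, hc0]
  have hXg : (PowerSeries.X : ℂ⟦X⟧) ∣ (-g) := by
    rw [PowerSeries.X_dvd_iff]; simp [hgc]
  have hid : d * (∑ r ∈ Finset.range (n+1), (-g) ^ r) = 1 - (-g) ^ (n+1) := by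
    have := geom_sum_mul (-g) (n+1)
    have h1 : d = 1 - (-g) := by ring
    rw [h1]
    linear_combination -this
  have hinv : d⁻¹ * d = 1 := PowerSeries.inv_mul_cancel d (by rw [hc0]; exact one_ne_zero)
  have key : (d⁻¹ : ℂ⟦X⟧) = (∑ r ∈ Finset.range (n+1), (-g) ^ r) + d⁻¹ * (-g) ^ (n+1) := by
    calc d⁻¹ = d⁻¹ * (d * (∑ r ∈ Finset.range (n+1), (-g) ^ r) + (-g)^(n+1)) := by
              rw [hid]; ring
      _ = (∑ r ∈ Finset.range (n+1), (-g) ^ r) + d⁻¹ * (-g) ^ (n+1) := by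
              rw [mul_add, ← mul_assoc, hinv, one_mul]
  have hzero : PowerSeries.coeff n (d⁻¹ * (-g) ^ (n+1)) = 0 := by
    have : (PowerSeries.X : ℂ⟦X⟧) ^ (n+1) ∣ d⁻¹ * (-g) ^ (n+1) :=
      Dvd.dvd.mul_left (pow_dvd_pow_of_dvd hXg (n+1)) _
    exact (PowerSeries.X_pow_dvd_iff.mp this) n (Nat.lt_succ_self n)
  rw [key, map_add, hzero, add_zero, map_sum]
  rw [Finset.range_eq_Ico, Finset.sum_eq_sum_Ico_succ_bot (Nat.succ_pos n)]
  have h0 : PowerSeries.coeff n ((-g) ^ 0) = 0 := by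
    simp [PowerSeries.coeff_one, Nat.one_le_iff_ne_zero.mp hn]
  rw [h0, zero_add, ← Finset.Ico_add_one_right_eq_Icc]
  refine Finset.sum_congr rfl fun r hr => ?_
  simp only [Finset.mem_Ico, Nat.lt_succ_iff] at hr
  have hneg : PowerSeries.coeff n ((-g) ^ r) = (-1 : ℂ) ^ r * PowerSeries.coeff n (g ^ r) := by
    rw [neg_pow]
    have h1 : ((-1 : ℂ⟦X⟧)) ^ r = PowerSeries.C ((-1 : ℂ) ^ r) := by
      rw [map_pow]; norm_num
    rw [h1, PowerSeries.coeff_C_mul]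
  rw [hneg, coeff_pow_tuple]
  have hfilt : ∑ i ∈ Finset.Nat.antidiagonalTuple r n, ∏ j, PowerSeries.coeff (i j) g
      = ∑ i ∈ (Finset.Nat.antidiagonalTuple r n).filter (fun i => ∀ j, 1 ≤ i j),
          ∏ j, PowerSeries.coeff (i j) g := by
    refine (Finset.sum_filter_of_ne ?_).symm
    intro i hi hne j
    by_contra hj
    push_neg at hj
    interval_cases h : i j
    apply hne
    apply Finset.prod_eq_zero (Finset.mem_univ j)
    rw [h]
    simpa using hgc
  rw [hfilt]
  · rw [Finset.mul_sum, Finset.mul_sum]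
    refine Finset.sum_congr rfl fun i hi => ?_
    simp only [Finset.mem_filter] at hi
    have hco : ∀ j, PowerSeries.coeff (i j) g = (N.factorial : ℂ) * ((N + i j).factorial : ℂ)⁻¹ := by
      intro j
      have hj := hi.2 j
      have : PowerSeries.coeff (i j) (1 : ℂ⟦X⟧) = 0 := by
        simp [PowerSeries.coeff_one, Nat.one_le_iff_ne_zero.mp hj]
      simp [hg, hd, dSer, coeff_mk, this, div_eq_mul_inv]
    rw [Finset.prod_congr rfl (fun j _ => hco j), Finset.prod_mul_distrib, Finset.prod_const]
    simp only [Finset.card_univ, Fintype.card_fin]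
    ring

theorem stmt1 (N : ℕ) (hN : 1 ≤ N) (n : ℕ) (hn : 1 ≤ n) :
    hB N n = (n.factorial : ℂ) * ∑ r ∈ Finset.Icc 1 n, (-(N.factorial : ℂ)) ^ r *
      ∑ i ∈ (Finset.Nat.antidiagonalTuple r n).filter (fun i => ∀ j, 1 ≤ i j),
        ∏ j, ((N + i j).factorial : ℂ)⁻¹ := by
  rw [hB, coeff_inv_eq N n hn]
end

section
/- Let χ be a Dirichlet character of conductor f and N a positive integer. Then B_{N,n,χ}(x) = Σ_{k=0}^{n} Σ_{l=0}^{k} binomial(n,k) · S(k,l) · (x)_l · B_{N,n-k,χ}, where S(k,l) is the Stirling number of the second kind and (x)_l = x(x-1)⋯(x-l+1) is the falling factorial. -/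
open PowerSeries Finset

def stirling2 : ℕ → ℕ → ℕ
  | 0, 0 => 1
  | 0, _ + 1 => 0
  | _ + 1, 0 => 0
  | n + 1, k + 1 => (k + 1) * stirling2 n (k + 1) + stirling2 n k

lemma stirling2_zero_of_lt : ∀ (k l : ℕ), k < l → stirling2 k l = 0 := by
  intro k
  induction k with
  | zero =>
    intro l hl
    match l, hl with
    | m + 1, _ => rfl
  | succ n ih =>
    intro l hl
    match l, hl with
    | m + 1, h =>
      show (m + 1) * stirling2 n (m + 1) + stirling2 n m = 0
      rw [ih (m+1) (by omega), ih m (by omega)]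
      ring

lemma eSer_add (x a : ℂ) : eSer (x + a) = eSer x * eSer a := by
  have h : ∀ c : ℂ, eSer c = rescale c (exp ℂ) := by
    intro c; ext n; simp [eSer, coeff_rescale, coeff_exp, div_eq_mul_inv, mul_comm]
  rw [h, h, h, PowerSeries.exp_mul_exp_eq_exp_add]

lemma pow_eq_stirling (k : ℕ) (x : ℂ) :
    x ^ k = ∑ l ∈ range (k+1), (stirling2 k l : ℂ) * ∏ j ∈ range l, (x - (j:ℂ)) := by
  induction k with
  | zero => simp [stirling2]
  | succ k ih =>
    have hB : (∑ l ∈ range (k+1), (l:ℂ) * (stirling2 k l : ℂ) * ∏ j ∈ range l, (x - (j:ℂ)))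
        = ∑ i ∈ range (k+1), ((i:ℂ)+1) * (stirling2 k (i+1) : ℂ) * ∏ j ∈ range (i+1), (x - (j:ℂ)) := by
      rw [sum_range_succ' (fun l => (l:ℂ) * (stirling2 k l : ℂ) * ∏ j ∈ range l, (x - (j:ℂ))) k,
        sum_range_succ (fun i => ((i:ℂ)+1) * (stirling2 k (i+1) : ℂ) * ∏ j ∈ range (i+1), (x - (j:ℂ))) k,
        stirling2_zero_of_lt k (k+1) (by omega)]
      push_cast
      ring_nf
    calc x ^ (k+1) = x * x ^ k := by ring
    _ = ∑ l ∈ range (k+1), (stirling2 k l : ℂ) * (x * ∏ j ∈ range l, (x - (j:ℂ))) := by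
        rw [ih, mul_sum]; exact sum_congr rfl fun l _ => by ring
    _ = (∑ l ∈ range (k+1), (stirling2 k l : ℂ) * ∏ j ∈ range (l+1), (x - (j:ℂ)))
        + ∑ l ∈ range (k+1), (l:ℂ) * (stirling2 k l : ℂ) * ∏ j ∈ range l, (x - (j:ℂ)) := by
        rw [← sum_add_distrib]
        refine sum_congr rfl fun l _ => ?_
        rw [prod_range_succ]
        ring
    _ = ∑ l ∈ range (k+2), (stirling2 (k+1) l : ℂ) * ∏ j ∈ range l, (x - (j:ℂ)) := by
        rw [hB, sum_range_succ' (fun l => (stirling2 (k+1) l : ℂ) * ∏ j ∈ range l, (x - (j:ℂ))) (k+1),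
          ← sum_add_distrib]
        have h0 : stirling2 (k+1) 0 = 0 := rfl
        rw [h0]
        simp only [Nat.cast_zero, zero_mul, add_zero]
        refine sum_congr rfl fun i _ => ?_
        have : stirling2 (k+1) (i+1) = (i + 1) * stirling2 k (i + 1) + stirling2 k i := rfl
        rw [this]
        push_cast
        ring

theorem stmt10 (N f : ℕ) (hN : 1 ≤ N) (hf : 0 < f) (χ : DirichletCharacter ℂ f)
    (hχ : χ.IsPrimitive) (n : ℕ) (x : ℂ) :
    gBP N f χ n x = ∑ k ∈ Finset.range (n + 1), ∑ l ∈ Finset.range (k + 1),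
      (n.choose k : ℂ) * (stirling2 k l : ℂ) * (∏ j ∈ Finset.range l, (x - (j : ℂ))) *
        gB N f χ (n - k) := by
  set G : PowerSeries ℂ :=
    ((f : ℂ) ^ N)⁻¹ • ((∑ a ∈ Finset.Icc 1 f, (PowerSeries.C (χ (a : ZMod f))) * eSer ((a:ℂ))) * (dSer N f)⁻¹) with hG
  have hgB : ∀ m : ℕ, gB N f χ m = m.factorial * PowerSeries.coeff m G := by
    intro m
    simp only [gB, gBP, hG, zero_add]
  have hgBP : gBP N f χ n x = n.factorial * PowerSeries.coeff n (eSer x * G) := by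
    simp only [gBP, hG]
    congr 2
    rw [mul_smul_comm]
    congr 1
    rw [← mul_assoc]
    congr 1
    rw [mul_sum]
    refine sum_congr rfl fun a _ => ?_
    rw [eSer_add]
    ring
  have hcoeff : (PowerSeries.coeff n) (eSer x * G)
      = ∑ k ∈ range (n+1), (x ^ k / k.factorial) * PowerSeries.coeff (n - k) G := by
    rw [coeff_mul, Finset.Nat.sum_antidiagonal_eq_sum_range_succ_mk]
    refine sum_congr rfl fun k _ => ?_
    simp [eSer]
  rw [hgBP, hcoeff, mul_sum]
  refine sum_congr rfl fun k hk => ?_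
  have hkn : k ≤ n := by simp at hk; omega
  have h1 : (n.factorial : ℂ) * ((x ^ k / k.factorial) * PowerSeries.coeff (n - k) G)
      = (n.choose k : ℂ) * x ^ k * gB N f χ (n - k) := by
    rw [hgB (n - k), Nat.cast_choose ℂ hkn]
    have hk0 : (k.factorial : ℂ) ≠ 0 := Nat.cast_ne_zero.2 k.factorial_ne_zero
    have hnk0 : ((n-k).factorial : ℂ) ≠ 0 := Nat.cast_ne_zero.2 (n-k).factorial_ne_zero
    field_simp
  rw [h1, pow_eq_stirling k x, mul_sum, sum_mul]
  exact sum_congr rfl fun l _ => by ring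
end

section
/- Let χ be a Dirichlet character of conductor f, N ≥ 1, and S_n = Σ_{a=1}^{f} χ(a) a^n. Then for n ≥ 1: binomial(N+n, n)^{-1} · Σ_{i=0}^{n} binomial(N+n, i) · B_{N,i,χ} · f^{N+n-i} = S_n. -/
open PowerSeries Finset

theorem stmt12 (N f : ℕ) (hN : 1 ≤ N) (hf : 0 < f) (χ : DirichletCharacter ℂ f)
    (hχ : χ.IsPrimitive) (n : ℕ) (hn : 1 ≤ n) :
    (((N + n).choose n : ℂ))⁻¹ *
      ∑ i ∈ Finset.range (n + 1), ((N + n).choose i : ℂ) * gB N f χ i * (f : ℂ) ^ (N + n - i) =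
    ∑ a ∈ Finset.Icc 1 f, χ (a : ZMod f) * (a : ℂ) ^ n := by
  classical
  set D := dSer N f with hDdef
  set A := ∑ a ∈ Finset.Icc 1 f, (PowerSeries.C (χ (a : ZMod f))) * eSer ((0 : ℂ) + a)
    with hAdef
  have hfc : (f : ℂ) ≠ 0 := Nat.cast_ne_zero.mpr hf.ne'
  have hD0 : PowerSeries.constantCoeff D = 1 := by
    simp [hDdef, dSer, div_self, Nat.cast_ne_zero.mpr N.factorial_ne_zero]
  have hDinv : D⁻¹ * D = 1 := PowerSeries.inv_mul_cancel D (by rw [hD0]; exact one_ne_zero)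
  set c : ℕ → ℂ := fun i => PowerSeries.coeff i (A * D⁻¹) with hcdef
  have hgB : ∀ i, gB N f χ i = (i.factorial : ℂ) * (((f : ℂ) ^ N)⁻¹ * c i) := by
    intro i
    rw [gB, gBP, hcdef]
    simp [hAdef, hDdef, smul_eq_mul]
  have key : (PowerSeries.coeff n) A =
      ∑ i ∈ Finset.range (n + 1),
        c i * ((N.factorial : ℂ) * (f : ℂ) ^ (n - i) / (N + (n - i)).factorial) := by
    conv_lhs => rw [← mul_one A, ← hDinv, ← mul_assoc]
    rw [PowerSeries.coeff_mul, Finset.Nat.sum_antidiagonal_eq_sum_range_succ_mk]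
    exact Finset.sum_congr rfl fun i _ => by simp [hDdef, dSer, hcdef]
  have coeffA : (PowerSeries.coeff n) A =
      ∑ a ∈ Finset.Icc 1 f, χ (a : ZMod f) * ((a : ℂ) ^ n / n.factorial) := by
    rw [hAdef, map_sum]
    exact Finset.sum_congr rfl fun a _ => by
      simp [eSer, PowerSeries.coeff_C_mul, mul_div_assoc]
  have hnfac : (n.factorial : ℂ) ≠ 0 := Nat.cast_ne_zero.mpr n.factorial_ne_zero
  rw [Finset.mul_sum]
  calc (∑ i ∈ Finset.range (n + 1), (((N + n).choose n : ℂ))⁻¹ *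
        (((N + n).choose i : ℂ) * gB N f χ i * (f : ℂ) ^ (N + n - i)))
      = ∑ i ∈ Finset.range (n + 1), (n.factorial : ℂ) *
        (c i * ((N.factorial : ℂ) * (f : ℂ) ^ (n - i) / (N + (n - i)).factorial)) := by
        refine Finset.sum_congr rfl fun i hi => ?_
        have hin : i ≤ n := Nat.lt_succ_iff.mp (Finset.mem_range.mp hi)
        have hpow : (f : ℂ) ^ (N + n - i) = (f : ℂ) ^ N * (f : ℂ) ^ (n - i) := by
          rw [← pow_add]; congr 1; omega
        have hnat : ((N + n).choose i : ℂ) * i.factorial * (N + (n - i)).factorial =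
            ((N + n).choose n : ℂ) * n.factorial * N.factorial := by
          have h1 : (N + n).choose i * i.factorial * (N + (n - i)).factorial =
              (N + n).factorial := by
            have := Nat.choose_mul_factorial_mul_factorial (show i ≤ N + n by omega)
            rwa [show N + n - i = N + (n - i) by omega] at this
          have h2 : (N + n).choose n * n.factorial * N.factorial = (N + n).factorial := by
            have := Nat.choose_mul_factorial_mul_factorial (show n ≤ N + n by omega)
            rwa [show N + n - n = N by omega] at this
          exact_mod_cast h1.trans h2.symm
        have hch : ((N + n).choose n : ℂ) ≠ 0 :=
          Nat.cast_ne_zero.mpr (Nat.choose_pos (Nat.le_add_left n N)).ne'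
        have hNifac : ((N + (n - i)).factorial : ℂ) ≠ 0 :=
          Nat.cast_ne_zero.mpr (N + (n - i)).factorial_ne_zero
        rw [hgB, hpow]
        field_simp
        linear_combination c i * hnat
    _ = (n.factorial : ℂ) * (PowerSeries.coeff n) A := by rw [← Finset.mul_sum, key]
    _ = ∑ a ∈ Finset.Icc 1 f, χ (a : ZMod f) * (a : ℂ) ^ n := by
        rw [coeffA, Finset.mul_sum]
        exact Finset.sum_congr rfl fun a _ => by field_simp
end

section
/- Let χ be a Dirichlet character of conductor f, N ≥ 1, and S_n(x) = Σ_{a=1}^{f} χ(a)(x+a)^n. Then for n ≥ 1: binomial(N+n, n)^{-1} · Σ_{i=0}^{n} binomial(N+n, i) · B_{N,i,χ}(x) · f^{N+n-i} = S_n(x). -/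
open PowerSeries Finset

lemma key (N f : ℕ) (χ : DirichletCharacter ℂ f) (x : ℂ) (n : ℕ) :
    ∑ i ∈ range (n+1),
      (PowerSeries.coeff i (((f : ℂ) ^ N)⁻¹ • ((∑ a ∈ Finset.Icc 1 f, (PowerSeries.C (χ (a : ZMod f))) * eSer (x + a)) * (dSer N f)⁻¹)))
        * ((N.factorial : ℂ) * (f : ℂ) ^ (n - i) / (N + (n - i)).factorial)
    = ((f : ℂ) ^ N)⁻¹ * ∑ a ∈ Finset.Icc 1 f, χ (a : ZMod f) * (x + a) ^ n / n.factorial := by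
  have h0 : PowerSeries.constantCoeff (dSer N f) = 1 := by
    simp [dSer]
    exact N.factorial_ne_zero
  have hinv : (dSer N f)⁻¹ * dSer N f = 1 :=
    PowerSeries.inv_mul_cancel _ (by rw [h0]; exact one_ne_zero)
  set G := (∑ a ∈ Finset.Icc 1 f, (PowerSeries.C (χ (a : ZMod f))) * eSer (x + a)) with hG
  have hFd : (((f : ℂ) ^ N)⁻¹ • (G * (dSer N f)⁻¹)) * dSer N f = ((f : ℂ) ^ N)⁻¹ • G := by
    rw [smul_mul_assoc, mul_assoc, hinv, mul_one]
  have := congrArg (PowerSeries.coeff n) hFd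
  rw [PowerSeries.coeff_mul, Finset.Nat.sum_antidiagonal_eq_sum_range_succ_mk] at this
  have hd : ∀ m, PowerSeries.coeff m (dSer N f) = (N.factorial : ℂ) * (f : ℂ) ^ m / (N + m).factorial := fun m => by simp [dSer]
  simp only [hd] at this
  rw [this]
  rw [map_smul, smul_eq_mul, map_sum]
  congr 1
  refine Finset.sum_congr rfl fun a _ => ?_
  rw [PowerSeries.coeff_C_mul]
  simp [eSer, mul_div_assoc]


set_option linter.unusedVariables false

theorem stmt13 (N f : ℕ) (hN : 1 ≤ N) (hf : 0 < f) (χ : DirichletCharacter ℂ f)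
    (hχ : χ.IsPrimitive) (n : ℕ) (hn : 1 ≤ n) (x : ℂ) :
    (((N + n).choose n : ℂ))⁻¹ *
      ∑ i ∈ Finset.range (n + 1), ((N + n).choose i : ℂ) * gBP N f χ i x * (f : ℂ) ^ (N + n - i) =
    ∑ a ∈ Finset.Icc 1 f, χ (a : ZMod f) * (x + (a : ℂ)) ^ n := by 
  have hkey := key N f χ x n
  set c : ℕ → ℂ := fun i => PowerSeries.coeff i
    (((f : ℂ) ^ N)⁻¹ • ((∑ a ∈ Finset.Icc 1 f, (PowerSeries.C (χ (a : ZMod f))) * eSer (x + a)) * (dSer N f)⁻¹)) with hc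
  have hgBP : ∀ i, gBP N f χ i x = (i.factorial : ℂ) * c i := fun i => rfl
  have hfC : (f : ℂ) ≠ 0 := Nat.cast_ne_zero.2 hf.ne'
  have hNf : (N.factorial : ℂ) ≠ 0 := Nat.cast_ne_zero.2 N.factorial_ne_zero
  have h2 : ∑ i ∈ Finset.range (n + 1), ((N + n).choose i : ℂ) * gBP N f χ i x * (f : ℂ) ^ (N + n - i)
      = ((N + n).factorial / N.factorial) * (f : ℂ) ^ N *
        ∑ i ∈ range (n+1), c i * ((N.factorial : ℂ) * (f : ℂ) ^ (n - i) / (N + (n - i)).factorial) := by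
    rw [Finset.mul_sum]
    refine Finset.sum_congr rfl fun i hi => ?_
    have hi' : i ≤ n := by simpa using Nat.lt_succ_iff.mp (Finset.mem_range.mp hi)
    have hni : N + (n - i) = N + n - i := by omega
    have hfp : (f : ℂ) ^ N * (f : ℂ) ^ (n - i) = (f : ℂ) ^ (N + n - i) := by
      rw [← pow_add, hni]
    have hcc : ((N+n).choose i : ℂ) * i.factorial * (N+n-i).factorial = (N+n).factorial := by
      exact_mod_cast congrArg (Nat.cast : ℕ → ℂ)
        (Nat.choose_mul_factorial_mul_factorial (by omega : i ≤ N + n))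
    rw [hgBP, hni]
    have hfac : ((N+n-i).factorial : ℂ) ≠ 0 := Nat.cast_ne_zero.2 (Nat.factorial_ne_zero _)
    field_simp
    rw [← hfp, ← hcc]; ring
  rw [h2, hkey]
  have hfN : ((f : ℂ) ^ N) ≠ 0 := pow_ne_zero _ hfC
  rw [Finset.mul_sum, Finset.mul_sum, Finset.mul_sum]
  refine Finset.sum_congr rfl fun a _ => ?_
  have hcn : ((N+n).choose n : ℂ) * n.factorial * N.factorial = (N+n).factorial := by
    have := Nat.choose_mul_factorial_mul_factorial (Nat.le_add_left n N)
    simp only [Nat.add_sub_cancel] at this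
    exact_mod_cast congrArg (Nat.cast : ℕ → ℂ) this
  have hch : ((N+n).choose n : ℂ) ≠ 0 := Nat.cast_ne_zero.2 (Nat.choose_pos (Nat.le_add_left n N)).ne'
  have hnf : ((n.factorial : ℂ)) ≠ 0 := Nat.cast_ne_zero.2 n.factorial_ne_zero
  field_simp
  ring_nf
  rw [← hcn]; ring
end

section
/- Let χ be a Dirichlet character of conductor f, N ≥ 1, S_m = Σ_{a=1}^{f} χ(a) a^m, and Ŝ_m = f^{-N} Σ_{a=1}^{f} χ(a)·(N! f^m/(N+m)! - a^m/m!). Then for n ≥ 1, B_{N,n,χ} = (-1)^n · n! times the determinant of the n×n lower Hessenberg matrix whose (i,j) entry for i ≤ n-1 is N! f^{i-j+1}/(N+i-j+1)! when j ≤ i, 1 when j = i+1, 0 when j > i+1, and whose bottom row is (Ŝ_n, Ŝ_{n-1}, …, Ŝ_1). -/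
open PowerSeries Finset

noncomputable def Shat (N f : ℕ) (χ : DirichletCharacter ℂ f) (m : ℕ) : ℂ :=
  ((f : ℂ) ^ N)⁻¹ * ∑ a ∈ Finset.Icc 1 f, χ (a : ZMod f) *
    ((N.factorial : ℂ) * (f : ℂ) ^ m / ((N + m).factorial : ℂ) - (a : ℂ) ^ m / (m.factorial : ℂ))


noncomputable def Mmat (d b : ℕ → ℂ) (n : ℕ) : Matrix (Fin n) (Fin n) ℂ :=
  Matrix.of fun i j =>
    if (i : ℕ) = n - 1 then b (n - (j : ℕ))
    else if (j : ℕ) = (i : ℕ) + 1 then 1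
    else if (j : ℕ) ≤ (i : ℕ) then d ((i : ℕ) - (j : ℕ) + 1)
    else 0

lemma Mmat_apply (d b : ℕ → ℂ) (n : ℕ) (i j : Fin n) :
    Mmat d b n i j =
      if (i : ℕ) = n - 1 then b (n - (j : ℕ))
      else if (j : ℕ) = (i : ℕ) + 1 then 1
      else if (j : ℕ) ≤ (i : ℕ) then d ((i : ℕ) - (j : ℕ) + 1)
      else 0 := rfl

lemma Mmat_one (d b : ℕ → ℂ) : (Mmat d b 1).det = b 1 := by
  simp [Mmat, Matrix.det_fin_one, Matrix.of_apply]

lemma Mmat_rec (d b : ℕ → ℂ) (m : ℕ) :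
    (Mmat d b (m + 2)).det =
      b 1 * (Mmat d d (m + 1)).det - (Mmat d (fun k => b (k + 1)) (m + 1)).det := by
  have hsA : ∀ r : Fin (m+1),
      (((Fin.castSucc (Fin.last m)).succAbove r : Fin (m+2)) : ℕ)
        = if (r:ℕ) < m then (r:ℕ) else (r:ℕ)+1 := by
    intro r
    by_cases hr : (r:ℕ) < m
    · rw [Fin.succAbove_of_castSucc_lt _ _ (by simpa [Fin.lt_def] using hr), if_pos hr]
      rfl
    · rw [Fin.succAbove_of_le_castSucc _ _ (by simp [Fin.le_def]; omega), if_neg hr]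
      rfl
  have hsB : ∀ r : Fin (m+1),
      (((Fin.last (m+1)).succAbove r : Fin (m+2)) : ℕ) = (r:ℕ) := by
    intro r
    rw [Fin.succAbove_last]
    rfl
  have hminor1 : (Mmat d b (m+2)).submatrix
      ((Fin.castSucc (Fin.last m)).succAbove) ((Fin.last (m+1)).succAbove)
      = Mmat d (fun k => b (k+1)) (m+1) := by
    ext r c
    rw [Matrix.submatrix_apply, Mmat_apply, Mmat_apply, hsA, hsB]
    have hc := c.isLt
    have hrl := r.isLt
    by_cases hr : (r:ℕ) < m
    · rw [if_pos hr, if_neg (show ¬ (r:ℕ) = m+2-1 by omega),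
        if_neg (show ¬ (r:ℕ) = m+1-1 by omega)]
    · rw [if_neg hr, if_pos (show (r:ℕ)+1 = m+2-1 by omega),
        if_pos (show (r:ℕ) = m+1-1 by omega)]
      congr 1
      omega
  have hminor2 : (Mmat d b (m+2)).submatrix
      ((Fin.last (m+1)).succAbove) ((Fin.last (m+1)).succAbove)
      = Mmat d d (m+1) := by
    ext r c
    rw [Matrix.submatrix_apply, Mmat_apply, Mmat_apply, hsB, hsB]
    have hc := c.isLt
    have hrl := r.isLt
    rw [if_neg (show ¬ (r:ℕ) = m+2-1 by omega)]
    by_cases hr : (r:ℕ) = m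
    · rw [if_pos (show (r:ℕ) = m+1-1 by omega),
        if_neg (show ¬ (c:ℕ) = (r:ℕ)+1 by omega),
        if_pos (show (c:ℕ) ≤ (r:ℕ) by omega)]
      congr 1
      omega
    · rw [if_neg (show ¬ (r:ℕ) = m+1-1 by omega)]
  have h := Matrix.det_succ_column (Mmat d b (m + 2)) (Fin.last (m + 1))
  rw [h, Fin.sum_univ_castSucc, Fin.sum_univ_castSucc]
  have hz : ∀ i : Fin m,
      (Mmat d b (m + 2)) (Fin.castSucc (Fin.castSucc i)) (Fin.last (m+1)) = 0 := by
    intro i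
    have hi := i.isLt
    rw [Mmat_apply]
    have h1 : ((Fin.castSucc (Fin.castSucc i) : Fin (m+2)) : ℕ) = (i : ℕ) := rfl
    have h2 : ((Fin.last (m+1) : Fin (m+2)) : ℕ) = m + 1 := rfl
    rw [h1, h2, if_neg (by omega), if_neg (by omega), if_neg (by omega)]
  rw [Finset.sum_eq_zero (fun i _ => by rw [hz i, mul_zero, zero_mul]), zero_add]
  rw [hminor1, hminor2]
  have e1 : (Mmat d b (m + 2)) (Fin.castSucc (Fin.last m)) (Fin.last (m+1)) = 1 := by
    rw [Mmat_apply]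
    have h1 : ((Fin.castSucc (Fin.last m) : Fin (m+2)) : ℕ) = m := rfl
    have h2 : ((Fin.last (m+1) : Fin (m+2)) : ℕ) = m + 1 := rfl
    rw [h1, h2, if_neg (by omega), if_pos (by omega)]
  have e2 : (Mmat d b (m + 2)) (Fin.last (m+1)) (Fin.last (m+1)) = b 1 := by
    rw [Mmat_apply]
    have h2 : ((Fin.last (m+1) : Fin (m+2)) : ℕ) = m + 1 := rfl
    rw [h2, if_pos (by omega)]
    congr 1
    omega
  rw [e1, e2]
  have h1 : ((Fin.castSucc (Fin.last m) : Fin (m+2)) : ℕ) = m := rfl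
  have h2 : ((Fin.last (m+1) : Fin (m+2)) : ℕ) = m + 1 := rfl
  rw [h1, h2]
  have s1 : ((-1 : ℂ)) ^ (m + (m + 1)) = -1 := Odd.neg_one_pow ⟨m, by ring⟩
  have s2 : ((-1 : ℂ)) ^ ((m + 1) + (m + 1)) = 1 := Even.neg_one_pow ⟨m + 1, by ring⟩
  rw [s1, s2]
  ring

lemma Mmat_det_sum (d : ℕ → ℂ) : ∀ n, ∀ b : ℕ → ℂ,
    (Mmat d b (n+1)).det
      = ∑ j ∈ Finset.range (n+1), b (n+1-j) * (-1)^(n+j) * (Mmat d d j).det := by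
  intro n
  induction n with
  | zero =>
    intro b
    simp [Mmat_one, Mmat_apply, Matrix.det_fin_zero]
  | succ n ih =>
    intro b
    rw [show n + 1 + 1 = n + 2 from rfl, Mmat_rec d b n, ih (fun k => b (k+1))]
    conv_rhs => rw [show n + 2 = (n+1)+1 from rfl, Finset.sum_range_succ]
    have h1 : (n + 1 + 1 : ℕ) - (n+1) = 1 := by omega
    have h2 : ((-1:ℂ))^(n+1+(n+1)) = 1 := Even.neg_one_pow ⟨n+1, by ring⟩
    rw [h1, h2]
    have h3 : ∀ j ∈ Finset.range (n+1),
        (fun k => b (k+1)) (n+1-j) * (-1:ℂ)^(n+j) * (Mmat d d j).det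
        = -(b (n+1+1-j) * (-1)^(n+1+j) * (Mmat d d j).det) := by
      intro j hj
      rw [Finset.mem_range] at hj
      have e1 : n+1-j+1 = n+1+1-j := by omega
      have e2 : ((-1:ℂ))^(n+1+j) = -(-1)^(n+j) := by
        rw [show n+1+j = (n+j)+1 from by omega, pow_succ]
        ring
      simp only [e1, e2]
      ring
    rw [Finset.sum_congr rfl h3, Finset.sum_neg_distrib]
    ring


noncomputable def dcf (N f : ℕ) (m : ℕ) : ℂ :=
  (N.factorial : ℂ) * (f : ℂ) ^ m / (N + m).factorial

lemma coeff_dSer (N f m : ℕ) : PowerSeries.coeff m (dSer N f) = dcf N f m :=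
  PowerSeries.coeff_mk m _

lemma dcf_zero (N f : ℕ) : dcf N f 0 = 1 := by
  simp [dcf, Nat.factorial_ne_zero]

lemma dSer_inv_mul (N f : ℕ) : (dSer N f)⁻¹ * dSer N f = 1 := by
  apply PowerSeries.inv_mul_cancel
  rw [← PowerSeries.coeff_zero_eq_constantCoeff_apply, coeff_dSer, dcf_zero]
  exact one_ne_zero

lemma dSer_mul_inv (N f : ℕ) : dSer N f * (dSer N f)⁻¹ = 1 := by
  rw [mul_comm]; exact dSer_inv_mul N f

lemma coeff_dSer_inv (N f j : ℕ) :
    PowerSeries.coeff j (dSer N f)⁻¹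
      = (-1)^j * (Mmat (dcf N f) (dcf N f) j).det := by
  set d := dcf N f with hd
  have hG : (PowerSeries.mk fun j => (-1:ℂ)^j * (Mmat d d j).det) * dSer N f = 1 := by
    ext n
    rw [PowerSeries.coeff_mul, Finset.Nat.sum_antidiagonal_eq_sum_range_succ_mk,
      PowerSeries.coeff_one]
    rcases n with _ | n
    · simp [PowerSeries.coeff_mk, coeff_dSer, dcf_zero, Matrix.det_fin_zero]
    · rw [if_neg (Nat.succ_ne_zero n)]
      have hterm : ∀ k, PowerSeries.coeff k (PowerSeries.mk fun j => (-1:ℂ)^j * (Mmat d d j).det)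
          * PowerSeries.coeff (n+1-k) (dSer N f)
          = (-1:ℂ)^k * (Mmat d d k).det * d (n+1-k) := by
        intro k
        rw [PowerSeries.coeff_mk, coeff_dSer]
      rw [Finset.sum_congr rfl (fun k _ => hterm k), Finset.sum_range_succ,
        Nat.sub_self, show d 0 = 1 from dcf_zero N f, mul_one, Mmat_det_sum d n d, Finset.mul_sum,
        ← Finset.sum_add_distrib]
      apply Finset.sum_eq_zero
      intro k hk
      have hsgn : ((-1:ℂ))^(n+1) * (-1:ℂ)^(n+k) = -(-1:ℂ)^k := by
        rw [← pow_add, show n+1+(n+k) = 2*n + (1+k) from by ring, pow_add, pow_mul]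
        simp [pow_add]
      linear_combination (d (n+1-k) * (Mmat d d k).det) * hsgn
  have hinv : (PowerSeries.mk fun j => (-1:ℂ)^j * (Mmat d d j).det) = (dSer N f)⁻¹ := by
    calc (PowerSeries.mk fun j => (-1:ℂ)^j * (Mmat d d j).det)
        = (PowerSeries.mk fun j => (-1:ℂ)^j * (Mmat d d j).det) * (dSer N f * (dSer N f)⁻¹) := by
          rw [dSer_mul_inv, mul_one]
      _ = ((PowerSeries.mk fun j => (-1:ℂ)^j * (Mmat d d j).det) * dSer N f) * (dSer N f)⁻¹ := by
          ring
      _ = (dSer N f)⁻¹ := by rw [hG, one_mul]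
  rw [← hinv, PowerSeries.coeff_mk]


theorem stmt16 (N f : ℕ) (hN : 1 ≤ N) (hf : 0 < f) (χ : DirichletCharacter ℂ f)
    (hχ : χ.IsPrimitive) (n : ℕ) (hn : 1 ≤ n) :
    gB N f χ n = (-1) ^ n * (n.factorial : ℂ) *
      Matrix.det (Matrix.of fun i j : Fin n =>
        if (i : ℕ) = n - 1 then Shat N f χ (n - (j : ℕ))
        else if (j : ℕ) = (i : ℕ) + 1 then 1
        else if (j : ℕ) ≤ (i : ℕ) then
          (N.factorial : ℂ) * (f : ℂ) ^ ((i : ℕ) - (j : ℕ) + 1) /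
            ((N + ((i : ℕ) - (j : ℕ)) + 1).factorial : ℂ)
        else 0) := by
  obtain ⟨m, rfl⟩ : ∃ m, n = m + 1 := ⟨n - 1, by omega⟩
  have hmat : (Matrix.of fun i j : Fin (m+1) =>
        if (i : ℕ) = (m+1) - 1 then Shat N f χ ((m+1) - (j : ℕ))
        else if (j : ℕ) = (i : ℕ) + 1 then 1
        else if (j : ℕ) ≤ (i : ℕ) then
          (N.factorial : ℂ) * (f : ℂ) ^ ((i : ℕ) - (j : ℕ) + 1) /
            ((N + ((i : ℕ) - (j : ℕ)) + 1).factorial : ℂ)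
        else 0) = Mmat (dcf N f) (Shat N f χ) (m+1) := by
    ext i j
    rw [Matrix.of_apply, Mmat_apply]
    split_ifs <;> rfl
  rw [hmat, Mmat_det_sum (dcf N f) m (Shat N f χ)]
  set d := dcf N f with hd
  set e := fun j => PowerSeries.coeff j (dSer N f)⁻¹ with he
  set E := fun j => (Mmat d d j).det with hE
  set t := ((f:ℂ)^N)⁻¹ with ht
  set sfun := fun k => ∑ a ∈ Finset.Icc 1 f, (χ (a : ZMod f)) * ((a:ℂ)^k / (k.factorial : ℂ)) with hsfun
  set c := ∑ a ∈ Finset.Icc 1 f, (χ (a : ZMod f)) with hc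
  have hS : ∀ k, PowerSeries.coeff k
      (∑ a ∈ Finset.Icc 1 f, (PowerSeries.C (χ (a : ZMod f))) * eSer ((0:ℂ) + a)) = sfun k := by
    intro k
    rw [map_sum, hsfun]
    refine Finset.sum_congr rfl fun a _ => ?_
    rw [PowerSeries.coeff_C_mul, eSer, PowerSeries.coeff_mk, zero_add]
  have hs0 : sfun 0 = c := by
    simp [hsfun, hc]
  have hShat : ∀ k, Shat N f χ k = t * (c * d k - sfun k) := by
    intro k
    rw [Shat]
    congr 1
    rw [show (∑ a ∈ Finset.Icc 1 f, (χ (a : ZMod f)) *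
        ((N.factorial : ℂ) * (f : ℂ) ^ k / ((N + k).factorial : ℂ) - (a : ℂ) ^ k / (k.factorial : ℂ)))
      = ∑ a ∈ Finset.Icc 1 f, ((χ (a : ZMod f)) * d k - (χ (a : ZMod f)) * ((a:ℂ)^k / (k.factorial : ℂ)))
      from Finset.sum_congr rfl fun a _ => by rw [mul_sub]; rfl]
    rw [Finset.sum_sub_distrib, ← Finset.sum_mul]
  have hEe : ∀ j, E j = (-1:ℂ)^j * e j := by
    intro j
    rw [he, hE]
    simp only [coeff_dSer_inv N f j, ← hd, ← mul_assoc, ← pow_add]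
    rw [Even.neg_one_pow ⟨j, by ring⟩, one_mul]
  -- coefficient facts
  have hA : ∑ j ∈ Finset.range (m+2), e j * d (m+1-j) = 0 := by
    have h1 := congrArg (PowerSeries.coeff (m+1)) (dSer_inv_mul N f)
    rw [PowerSeries.coeff_mul, Finset.Nat.sum_antidiagonal_eq_sum_range_succ_mk,
      PowerSeries.coeff_one, if_neg (Nat.succ_ne_zero m)] at h1
    rw [← h1]
    exact Finset.sum_congr rfl fun j _ => by rw [he, coeff_dSer, hd]
  have hQ : ∑ j ∈ Finset.range (m+1), e j * d (m+1-j) = -(e (m+1)) := by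
    rw [Finset.sum_range_succ, Nat.sub_self, show d 0 = 1 from dcf_zero N f, mul_one] at hA
    linear_combination hA
  have hcoeff : PowerSeries.coeff (m+1)
      ((∑ a ∈ Finset.Icc 1 f, (PowerSeries.C (χ (a : ZMod f))) * eSer ((0:ℂ) + a)) * (dSer N f)⁻¹)
      = ∑ j ∈ Finset.range (m+2), e j * sfun (m+1-j) := by
    rw [mul_comm, PowerSeries.coeff_mul, Finset.Nat.sum_antidiagonal_eq_sum_range_succ_mk]
    exact Finset.sum_congr rfl fun j _ => by rw [hS, he]
  have key' : ∀ j ∈ Finset.range (m+1),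
      (-1:ℂ)^(m+1) * (Shat N f χ (m+1-j) * (-1:ℂ)^(m+j) * E j)
        = t * (e j * sfun (m+1-j)) - (t*c) * (e j * d (m+1-j)) := by
    intro j hj
    rw [hShat, hEe j]
    have hsgn : (-1:ℂ)^(m+1) * ((-1:ℂ)^(m+j) * (-1:ℂ)^j) = -1 := by
      rw [← pow_add, ← pow_add]
      exact Odd.neg_one_pow ⟨m+j, by ring⟩
    linear_combination (t * (c * d (m+1-j) - sfun (m+1-j)) * e j) * hsgn
  have hRHS : (-1:ℂ)^(m+1) * ((m+1).factorial : ℂ) *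
      (∑ j ∈ Finset.range (m+1), Shat N f χ (m+1-j) * (-1:ℂ)^(m+j) * E j)
      = ((m+1).factorial : ℂ) * ∑ j ∈ Finset.range (m+1),
          (-1:ℂ)^(m+1) * (Shat N f χ (m+1-j) * (-1:ℂ)^(m+j) * E j) := by
    simp only [Finset.mul_sum]
    exact Finset.sum_congr rfl fun j _ => by ring
  rw [hRHS, Finset.sum_congr rfl key', Finset.sum_sub_distrib, ← Finset.mul_sum,
    ← Finset.mul_sum, hQ]
  simp only [gB, gBP]
  rw [PowerSeries.coeff_smul, smul_eq_mul, hcoeff, Finset.sum_range_succ, Nat.sub_self, hs0]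
  rw [← ht]
  ring
end

section
/- Let χ be a Dirichlet character of conductor f, N ≥ 1, and S_n = Σ_{a=1}^{f} χ(a) a^n. Then B_{N,n,χ} satisfies B_{N,0,χ} = S_0/f^N and, for n ≥ 1, B_{N,n,χ} = S_n/f^N - Σ_{i=0}^{n-1} (N!·n!·f^{n-i})/((N+n-i)!·i!) · B_{N,i,χ}. -/
open PowerSeries Finset

lemma dSer_coeff (N f m : ℕ) :
    PowerSeries.coeff m (dSer N f) = (N.factorial : ℂ) * (f : ℂ) ^ m / (N + m).factorial := by
  simp [dSer]

lemma dSer_const (N f : ℕ) : PowerSeries.constantCoeff (dSer N f) = 1 := by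
  have : PowerSeries.constantCoeff (dSer N f) = PowerSeries.coeff 0 (dSer N f) := by
    simp [PowerSeries.coeff_zero_eq_constantCoeff]
  rw [this, dSer_coeff]
  simp [Nat.factorial_ne_zero]

theorem stmt17 (N f : ℕ) (hN : 1 ≤ N) (hf : 0 < f) (χ : DirichletCharacter ℂ f)
    (hχ : χ.IsPrimitive) :
    gB N f χ 0 = (∑ a ∈ Finset.Icc 1 f, χ (a : ZMod f)) / (f : ℂ) ^ N ∧
    ∀ n : ℕ, 1 ≤ n →
      gB N f χ n = (∑ a ∈ Finset.Icc 1 f, χ (a : ZMod f) * (a : ℂ) ^ n) / (f : ℂ) ^ N -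
        ∑ i ∈ Finset.range n,
          ((N.factorial : ℂ) * (n.factorial : ℂ) * (f : ℂ) ^ (n - i)) /
            (((N + n - i).factorial : ℂ) * (i.factorial : ℂ)) * gB N f χ i := by
  have hfC : (f : ℂ) ≠ 0 := Nat.cast_ne_zero.mpr hf.ne'
  have hfN : ((f : ℂ) ^ N) ≠ 0 := pow_ne_zero _ hfC
  set E : PowerSeries ℂ :=
    ∑ a ∈ Finset.Icc 1 f, (PowerSeries.C (χ (a : ZMod f))) * eSer ((0 : ℂ) + a) with hE
  set G : PowerSeries ℂ := E * (dSer N f)⁻¹ with hG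
  have hEG : E = G * dSer N f := by
    rw [hG, mul_comm G, ← mul_assoc, mul_comm (dSer N f) E, mul_assoc, dSer_mul_inv, mul_one]
  have hcoeE : ∀ n : ℕ, PowerSeries.coeff n E
      = ∑ a ∈ Finset.Icc 1 f, χ (a : ZMod f) * ((a : ℂ) ^ n / n.factorial) := by
    intro n
    rw [hE, map_sum]
    refine Finset.sum_congr rfl fun a _ => ?_
    simp [eSer, PowerSeries.coeff_C_mul]
  have hgB : ∀ n : ℕ, gB N f χ n
      = (n.factorial : ℂ) * (((f : ℂ) ^ N)⁻¹ * PowerSeries.coeff n G) := by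
    intro n
    rw [gB, gBP, map_smul, smul_eq_mul, ← hE, ← hG]
  have hGn : ∀ n : ℕ, PowerSeries.coeff n G = PowerSeries.coeff n E -
      ∑ k ∈ Finset.range n, PowerSeries.coeff k G * PowerSeries.coeff (n - k) (dSer N f) := by
    intro n
    have h1 : PowerSeries.coeff n E = ∑ k ∈ Finset.range (n + 1),
        PowerSeries.coeff k G * PowerSeries.coeff (n - k) (dSer N f) := by
      rw [hEG, PowerSeries.coeff_mul,
        Finset.Nat.sum_antidiagonal_eq_sum_range_succ_mk]
    rw [Finset.sum_range_succ] at h1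
    have h0 : PowerSeries.coeff (n - n) (dSer N f) = 1 := by
      rw [Nat.sub_self]
      simpa [PowerSeries.coeff_zero_eq_constantCoeff] using dSer_const N f
    rw [h0, mul_one] at h1
    rw [h1]; ring
  constructor
  · rw [hgB 0, hGn 0, hcoeE 0]
    simp
    rw [div_eq_mul_inv, mul_comm]
  · intro n hn
    rw [hgB n, hGn n, hcoeE n, mul_sub, mul_sub]
    congr 1
    · rw [Finset.mul_sum, Finset.mul_sum, Finset.sum_div]
      refine Finset.sum_congr rfl fun a _ => ?_
      have hnf : ((n.factorial : ℂ)) ≠ 0 := Nat.cast_ne_zero.mpr n.factorial_ne_zero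
      field_simp
    · rw [Finset.mul_sum, Finset.mul_sum]
      refine Finset.sum_congr rfl fun k hk => ?_
      have hkn : k ≤ n := (Finset.mem_range.mp hk).le
      have hsub : N + n - k = N + (n - k) := by omega
      rw [dSer_coeff, hgB k, hsub]
      have hkf : ((k.factorial : ℂ)) ≠ 0 := Nat.cast_ne_zero.mpr k.factorial_ne_zero
      have hNf : (((N + (n - k)).factorial : ℂ)) ≠ 0 :=
        Nat.cast_ne_zero.mpr (N + (n - k)).factorial_ne_zero
      field_simp
end
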